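/- For reals s, ρ with ρ ≤ −2k < 0, k > 1, |s| ≤ 5k/4, and z ≥ 0 one has |1/√(s−ρ+ρ²z/2) − 1/√(−ρ+ρ²z/2)| ≤ |s|/(|ρ|·√(s+|ρ|)). -/

import Mathlib

theorem stmt_16 (s ρ z k : ℝ) (hk : 1 < k) (hρ : ρ ≤ -2 * k)
    (hs : |s| ≤ 5 * k / 4) (hz : 0 ≤ z) :
    |1 / Real.sqrt (s - ρ + ρ ^ 2 * z / 2) - 1 / Real.sqrt (-ρ + ρ ^ 2 * z / 2)| ≤
      |s| / (|ρ| * Real.sqrt (s + |ρ|)) := by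
  have hk0 : (0:ℝ) < k := by linarith
  have hρneg : ρ < 0 := by nlinarith
  have habs : |ρ| = -ρ := abs_of_neg hρneg
  have hslb : -(5 * k / 4) ≤ s := by
    have := abs_le.mp hs; linarith [this.1]
  have hsρ : 0 < s + |ρ| := by rw [habs]; nlinarith
  have hq : 0 ≤ ρ ^ 2 * z / 2 := by positivity
  set A := s - ρ + ρ ^ 2 * z / 2 with hA
  set B := -ρ + ρ ^ 2 * z / 2 with hB
  have hApos : 0 < A := by rw [hA]; rw [habs] at hsρ; linarith
  have hBpos : 0 < B := by rw [hB]; linarith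
  have hAB : s + |ρ| ≤ A := by rw [hA, habs]; linarith
  have hBρ : |ρ| ≤ B := by rw [hB, habs]; linarith
  set a := Real.sqrt A with ha
  set b := Real.sqrt B with hb
  have hapos : 0 < a := Real.sqrt_pos.mpr hApos
  have hbpos : 0 < b := Real.sqrt_pos.mpr hBpos
  have ha2 : a ^ 2 = A := Real.sq_sqrt hApos.le
  have hb2 : b ^ 2 = B := Real.sq_sqrt hBpos.le
  have hdiff : 1 / a - 1 / b = -s / (a * b * (a + b)) := by
    have h1 : (b - a) * (b + a) = -s := by
      have h2 : b ^ 2 - a ^ 2 = -s := by rw [ha2, hb2, hA, hB]; ring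
      linear_combination h2
    field_simp
    linear_combination h1
  rw [hdiff, abs_div, abs_neg]
  have hden : |ρ| * Real.sqrt (s + |ρ|) ≤ a * b * (a + b) := by
    have h1 : Real.sqrt (s + |ρ|) ≤ a := Real.sqrt_le_sqrt hAB
    have h2 : |ρ| ≤ b * (a + b) := by
      calc |ρ| ≤ B := hBρ
        _ = b * b := by rw [← sq, hb2]
        _ ≤ b * (a + b) := by nlinarith
    calc |ρ| * Real.sqrt (s + |ρ|) ≤ (b * (a + b)) * a := by
          apply mul_le_mul h2 h1 (Real.sqrt_nonneg _) (by positivity)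
      _ = a * b * (a + b) := by ring
  have hpos : 0 < |ρ| * Real.sqrt (s + |ρ|) := by
    apply mul_pos (by rw [habs]; linarith) (Real.sqrt_pos.mpr hsρ)
  rw [abs_of_pos (by positivity : (0:ℝ) < a * b * (a + b))]
  exact div_le_div_of_nonneg_left (abs_nonneg s) hpos hden
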